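/- arXiv:1009.5785 — 2 statements merged into one kernel-verified Lean document; each statement's English description precedes it below -/
import Mathlib

section
/- Let n ≥ 3 be an integer, c ∈ [0,1), and a = (a_0, a_1, …, a_n) ∈ ℝ^{n+1}. If 0 = a_0 = a_1 ≤ min_{2 ≤ l ≤ n} a_l < max_{2 ≤ l ≤ n} a_l, then the function F_{c,a} : [0,1] → ℝ defined by F_{c,a}(t) = Σ_{i=0}^{n} a_i · φ_{i,n}((t−c)/(1−c)) for t ∈ (c,1] and F_{c,a}(t) = 0 for t ∈ [0,c] is continuously differentiable on [0,1] (derivatives at 0 and 1 being one-sided), is constantly 0 on [0,c], and is strictly positive on (c,1). -/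
/-- Bernstein basis polynomial `φ_{i,n}(t) = C(n,i) t^i (1-t)^{n-i}`. -/
noncomputable def phi (n i : ℕ) (t : ℝ) : ℝ :=
  (n.choose i : ℝ) * t ^ i * (1 - t) ^ (n - i)

/-- `F_{c,a}(t) = Σ_{i=0}^{n} a_i φ_{i,n}((t-c)/(1-c)) 1_{(c,1]}(t)` on `[0,1]`. -/
noncomputable def Fca (c : ℝ) (n : ℕ) (a : ℕ → ℝ) (t : ℝ) : ℝ :=
  if c < t then ∑ i ∈ Finset.range (n + 1), a i * phi n i ((t - c) / (1 - c)) else 0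

noncomputable def qsq (x : ℝ) : ℝ := (max x 0) ^ 2

lemma hasDerivAt_qsq (x : ℝ) : HasDerivAt qsq (2 * max x 0) x := by
  rcases lt_trichotomy x 0 with h | h | h
  · have he : qsq =ᶠ[nhds x] fun _ => (0:ℝ) := by
      filter_upwards [Iio_mem_nhds h] with y hy
      simp [qsq, max_eq_right (le_of_lt (Set.mem_Iio.1 hy))]
    have := (hasDerivAt_const x (0:ℝ)).congr_of_eventuallyEq he
    simpa [max_eq_right h.le] using this
  · subst h
    rw [hasDerivAt_iff_isLittleO]
    have hfe : (fun y => qsq y - qsq 0 - (y - 0) • (2 * max (0:ℝ) 0)) =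
        fun y => (max y 0) ^ 2 := by
      funext y; simp [qsq]
    rw [hfe, Asymptotics.isLittleO_iff]
    intro ε hε
    filter_upwards [Metric.ball_mem_nhds (0:ℝ) hε] with y hy
    have h1 : |max y 0| ≤ |y| := by
      rcases le_or_gt y 0 with h' | h'
      · simp [max_eq_right h', abs_nonneg]
      · simp [max_eq_left h'.le]
    have h2 : |y| < ε := by simpa [Real.dist_eq] using hy
    have h0 : ‖y - 0‖ = |y| := by simp
    rw [h0]
    calc ‖(max y 0) ^ 2‖ = |max y 0| * |max y 0| := by
          simp [pow_two, abs_mul]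
      _ ≤ ε * |y| :=
          mul_le_mul (le_of_lt (lt_of_le_of_lt h1 h2)) h1 (abs_nonneg _) hε.le
  · have he : qsq =ᶠ[nhds x] fun y => y ^ 2 := by
      filter_upwards [Ioi_mem_nhds h] with y hy
      simp [qsq, max_eq_left (le_of_lt (Set.mem_Ioi.1 hy))]
    have := (hasDerivAt_pow 2 x).congr_of_eventuallyEq he
    simpa [max_eq_left h.le, mul_comm] using this

lemma contDiff_qsq : ContDiff ℝ 1 qsq := by
  rw [contDiff_one_iff_deriv]
  refine ⟨fun x => (hasDerivAt_qsq x).differentiableAt, ?_⟩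
  have : deriv qsq = fun x => 2 * max x 0 := funext fun x => (hasDerivAt_qsq x).deriv
  rw [this]
  exact continuous_const.mul (continuous_id.max continuous_const)

theorem stmt0 (n : ℕ) (hn : 3 ≤ n) (c : ℝ) (hc : c ∈ Set.Ico (0 : ℝ) 1)
    (a : ℕ → ℝ) (ha0 : a 0 = 0) (ha1 : a 1 = 0)
    (hnonneg : ∀ l, 2 ≤ l → l ≤ n → 0 ≤ a l)
    (hminmax : ∃ l₁ l₂, 2 ≤ l₁ ∧ l₁ ≤ n ∧ 2 ≤ l₂ ∧ l₂ ≤ n ∧ a l₁ < a l₂) :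
    ContDiffOn ℝ 1 (Fca c n a) (Set.Icc 0 1) ∧
    (∀ t ∈ Set.Icc 0 c, Fca c n a t = 0) ∧
    (∀ t ∈ Set.Ioo c 1, 0 < Fca c n a t) := by
  obtain ⟨hc0, hc1⟩ := hc
  have hc1' : (0:ℝ) < 1 - c := by linarith
  set s : ℝ → ℝ := fun t => (t - c) / (1 - c) with hs
  set h : ℝ → ℝ := fun t => ∑ i ∈ Finset.range (n + 1),
      a i * (n.choose i : ℝ) * (s t) ^ (i - 2) * (1 - s t) ^ (n - i) with hh
  have key : Fca c n a = fun t => qsq (s t) * h t := by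
    funext t
    rw [Fca]
    split_ifs with ht
    · have hst : 0 < s t := div_pos (by linarith) hc1'
      rw [qsq, max_eq_left hst.le, hh, Finset.mul_sum]
      apply Finset.sum_congr rfl
      intro i hi
      rcases Nat.lt_or_ge i 2 with h2 | h2
      · interval_cases i <;> simp [ha0, ha1]
      · have hp : s t ^ 2 * s t ^ (i - 2) = s t ^ i := by
          rw [← pow_add]; congr 1; omega
        rw [phi, ← hp]; ring
    · have hst : s t ≤ 0 := div_nonpos_of_nonpos_of_nonneg (by linarith) hc1'.le
      rw [qsq, max_eq_right hst]
      simp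
  refine ⟨?_, ?_, ?_⟩
  · have hsC : ContDiff ℝ 1 s := (contDiff_id.sub contDiff_const).div_const _
    have hhC : ContDiff ℝ 1 h := by
      rw [hh]
      apply ContDiff.sum
      intro i _
      exact ((contDiff_const.mul (hsC.pow _)).mul
        ((contDiff_const.sub hsC).pow _))
    rw [key]
    exact ((contDiff_qsq.comp hsC).mul hhC).contDiffOn
  · intro t ht
    rw [Fca, if_neg (not_lt.2 ht.2)]
  · intro t ht
    obtain ⟨ht1, ht2⟩ := ht
    rw [Fca, if_pos ht1]
    have hst0 : 0 < s t := div_pos (by linarith) hc1'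
    have hst1 : s t < 1 := by
      rw [div_lt_one hc1']; linarith
    apply Finset.sum_pos'
    · intro i hi
      rcases Nat.lt_or_ge i 2 with h2 | h2
      · interval_cases i <;> simp [ha0, ha1]
      · have hin : i ≤ n := by
          have := Finset.mem_range.1 hi; omega
        apply mul_nonneg (hnonneg i h2 hin)
        rw [phi]
        exact mul_nonneg (mul_nonneg (Nat.cast_nonneg _) (pow_nonneg hst0.le _))
          (pow_nonneg (by linarith) _)
    · obtain ⟨l₁, l₂, hl1a, hl1b, hl2a, hl2b, hlt⟩ := hminmax
      refine ⟨l₂, Finset.mem_range.2 (by omega), ?_⟩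
      have hal2 : 0 < a l₂ := lt_of_le_of_lt (hnonneg l₁ hl1a hl1b) hlt
      apply mul_pos hal2
      rw [phi]
      have hch : (0:ℝ) < (n.choose l₂ : ℝ) := by
        exact_mod_cast Nat.choose_pos hl2b
      exact mul_pos (mul_pos hch (pow_pos hst0 _)) (pow_pos (by linarith) _)
end

section
/- Let f : [0,1] → ℝ be continuously differentiable (derivatives at 0 and 1 being one-sided) with f(0) = 0 and f'(0) = 0. For each integer n ≥ 2 define G_n(t) = Σ_{i=2}^{n} f(i/n) · φ_{i,n}(t), i.e., the n-th Bernstein polynomial of f with the coefficients of φ_{0,n} and φ_{1,n} replaced by 0. Then e(G_n, f) = ‖G_n − f‖_∞ + ‖G_n' − f'‖_∞ → 0 as n → ∞. -/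
/-- `G_n(t) = Σ_{i=2}^{n} f(i/n) φ_{i,n}(t)`: the `n`-th Bernstein polynomial of `f`
with the coefficients of `φ_{0,n}` and `φ_{1,n}` replaced by `0`. -/
noncomputable def G (f : ℝ → ℝ) (n : ℕ) (t : ℝ) : ℝ :=
  ∑ i ∈ Finset.Icc 2 n, f ((i : ℝ) / (n : ℝ)) * phi n i t

/-- `e(f,g) = ‖f - g‖_∞ + ‖f' - g'‖_∞` on `[0,1]`, with one-sided derivatives at the
endpoints (derivatives within `[0,1]`). -/
noncomputable def eDist (f g : ℝ → ℝ) : ℝ :=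
  (⨆ t : Set.Icc (0 : ℝ) 1, |f t.1 - g t.1|) +
    (⨆ t : Set.Icc (0 : ℝ) 1,
      |derivWithin f (Set.Icc 0 1) t.1 - derivWithin g (Set.Icc 0 1) t.1|)

open Filter

lemma phi_eq (n i : ℕ) (t : ℝ) : (bernsteinPolynomial ℝ n i).eval t = phi n i t := by
  simp [bernsteinPolynomial, phi]

lemma phi_nonneg {n i : ℕ} {t : ℝ} (h0 : 0 ≤ t) (h1 : t ≤ 1) : 0 ≤ phi n i t := by
  have : 0 ≤ 1 - t := by linarith
  unfold phi; positivity

lemma phi_sum (n : ℕ) (t : ℝ) : ∑ i ∈ Finset.range (n + 1), phi n i t = 1 := by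
  have h := bernsteinPolynomial.sum ℝ n
  have := congrArg (Polynomial.eval t) h
  simpa [Polynomial.eval_finset_sum, phi_eq] using this

lemma phi_le_one {n i : ℕ} {t : ℝ} (hi : i ≤ n) (h0 : 0 ≤ t) (h1 : t ≤ 1) :
    phi n i t ≤ 1 := by
  have := Finset.single_le_sum (f := fun j => phi n j t)
    (fun j _ => phi_nonneg h0 h1) (Finset.mem_range.2 (Nat.lt_succ_of_le hi))
  rw [phi_sum] at this
  exact this

lemma phi_hasDerivAt (n ν : ℕ) (t : ℝ) :
    HasDerivAt (phi n (ν + 1)) ((n : ℝ) * (phi (n - 1) ν t - phi (n - 1) (ν + 1) t)) t := by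
  have h := Polynomial.hasDerivAt (bernsteinPolynomial ℝ n (ν + 1)) t
  rw [bernsteinPolynomial.derivative_succ] at h
  have hfun : (fun x => Polynomial.eval x (bernsteinPolynomial ℝ n (ν + 1))) = phi n (ν + 1) :=
    funext fun x => phi_eq n (ν + 1) x
  rw [hfun] at h
  simpa [phi_eq] using h

lemma phi_top (n : ℕ) (t : ℝ) : phi n (n + 1) t = 0 := by
  simp [phi, Nat.choose_eq_zero_of_lt (Nat.lt_succ_self n)]

lemma range_split {n : ℕ} (hn : 2 ≤ n) :
    Finset.range (n + 1) = insert 0 (insert 1 (Finset.Icc 2 n)) := by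
  ext x
  simp only [Finset.mem_range, Finset.mem_insert, Finset.mem_Icc]
  omega

lemma G_eq {f : ℝ → ℝ} {n : ℕ} (hn : 2 ≤ n) (hf0 : f 0 = 0) (t : ℝ) :
    G f n t = (∑ i ∈ Finset.range (n + 1), f ((i : ℝ) / n) * phi n i t)
      - f (1 / (n : ℝ)) * phi n 1 t := by
  rw [range_split hn, Finset.sum_insert (by simp), Finset.sum_insert (by simp)]
  simp [hf0, G]

lemma G_hasDerivAt (f : ℝ → ℝ) (n : ℕ) (t : ℝ) :
    HasDerivAt (G f n)
      (∑ i ∈ Finset.Icc 2 n,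
        f ((i : ℝ) / n) * ((n : ℝ) * (phi (n - 1) (i - 1) t - phi (n - 1) i t))) t := by
  unfold G
  apply HasDerivAt.fun_sum
  intro i hi
  have h2 : 2 ≤ i := (Finset.mem_Icc.1 hi).1
  obtain ⟨ν, rfl⟩ : ∃ ν, i = ν + 1 := ⟨i - 1, by omega⟩
  simpa using (phi_hasDerivAt n ν t).const_mul (f (((ν + 1 : ℕ) : ℝ) / n))

lemma G_deriv_eq {f : ℝ → ℝ} {n : ℕ} (hn : 2 ≤ n) (hf0 : f 0 = 0) (t : ℝ) :
    deriv (G f n) t =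
      (∑ j ∈ Finset.range n,
        ((n : ℝ) * (f (((j + 1 : ℕ) : ℝ) / n) - f ((j : ℝ) / n))) * phi (n - 1) j t)
      - (n : ℝ) * f (1 / (n : ℝ)) * (phi (n - 1) 0 t - phi (n - 1) 1 t) := by
  rw [(G_hasDerivAt f n t).deriv]
  set c : ℕ → ℝ := fun i => f ((i : ℝ) / n) with hc
  set ψ : ℕ → ℝ := fun j => phi (n - 1) j t with hψ
  have I1 : ∑ i ∈ Finset.Icc 2 n, c i * ψ (i - 1)
      = (∑ j ∈ Finset.range n, c (j + 1) * ψ j) - c 1 * ψ 0 := by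
    have e1 : ∑ i ∈ Finset.Icc 2 n, c i * ψ (i - 1)
        = ∑ j ∈ Finset.Icc 1 (n - 1), c (j + 1) * ψ j := by
      apply Finset.sum_nbij' (fun i => i - 1) (fun j => j + 1)
      · intro a ha; simp only [Finset.mem_Icc] at *; omega
      · intro a ha; simp only [Finset.mem_Icc] at *; omega
      · intro a ha; simp only [Finset.mem_Icc] at ha; omega
      · intro a _; omega
      · intro a ha
        simp only [Finset.mem_Icc] at ha
        have : a - 1 + 1 = a := by omega
        rw [this]
    have e2 : Finset.range n = insert 0 (Finset.Icc 1 (n - 1)) := by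
      ext x
      simp only [Finset.mem_range, Finset.mem_insert, Finset.mem_Icc]
      omega
    rw [e1, e2, Finset.sum_insert (by simp)]
    ring
  have I2 : ∑ i ∈ Finset.Icc 2 n, c i * ψ i
      = (∑ j ∈ Finset.range n, c j * ψ j) - c 1 * ψ 1 := by
    have e0 : c 0 = 0 := by simp [hc, hf0]
    have eψ : ψ n = 0 := by
      have : n = (n - 1) + 1 := by omega
      rw [hψ]; simp only []; rw [this]; exact phi_top (n - 1) t
    have e1 : ∑ i ∈ Finset.range (n + 1), c i * ψ i
        = c 0 * ψ 0 + (c 1 * ψ 1 + ∑ i ∈ Finset.Icc 2 n, c i * ψ i) := by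
      rw [range_split hn, Finset.sum_insert (by simp), Finset.sum_insert (by simp)]
    have e2 : ∑ i ∈ Finset.range (n + 1), c i * ψ i
        = (∑ j ∈ Finset.range n, c j * ψ j) + c n * ψ n := Finset.sum_range_succ _ n
    rw [e2, eψ] at e1
    rw [e0] at e1
    linarith
  have expand : ∑ i ∈ Finset.Icc 2 n, c i * ((n : ℝ) * (ψ (i - 1) - ψ i))
      = (n : ℝ) * (∑ i ∈ Finset.Icc 2 n, c i * ψ (i - 1))
        - (n : ℝ) * (∑ i ∈ Finset.Icc 2 n, c i * ψ i) := by
    rw [Finset.mul_sum, Finset.mul_sum, ← Finset.sum_sub_distrib]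
    exact Finset.sum_congr rfl fun i _ => by ring
  have expand2 : ∑ j ∈ Finset.range n, ((n : ℝ) * (c (j + 1) - c j)) * ψ j
      = (n : ℝ) * (∑ j ∈ Finset.range n, c (j + 1) * ψ j)
        - (n : ℝ) * (∑ j ∈ Finset.range n, c j * ψ j) := by
    rw [Finset.mul_sum, Finset.mul_sum, ← Finset.sum_sub_distrib]
    exact Finset.sum_congr rfl fun i _ => by ring
  rw [expand, I1, I2, expand2]
  have hc1 : f (1 / (n : ℝ)) = c 1 := by simp [hc]
  have hp0 : phi (n - 1) 0 t = ψ 0 := rfl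
  have hp1 : phi (n - 1) 1 t = ψ 1 := rfl
  rw [hc1, hp0, hp1]
  ring

lemma bernApp_eval (n : ℕ) (g : ℝ → ℝ) (gC : C(unitInterval, ℝ))
    (hgC : ∀ x : unitInterval, gC x = g x) (x : unitInterval) :
    (bernsteinApproximation n gC) x
      = ∑ k ∈ Finset.range (n + 1), g ((k : ℝ) / n) * phi n k (x : ℝ) := by
  rw [bernsteinApproximation.apply]
  rw [← Fin.sum_univ_eq_sum_range (fun k => g ((k : ℝ) / n) * phi n k (x : ℝ)) (n + 1)]
  apply Finset.sum_congr rfl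
  intro k _
  rw [hgC, bernstein_apply]
  rw [smul_eq_mul, mul_comm]
  rfl

lemma bernApp_close (n : ℕ) (g : ℝ → ℝ) (gC : C(unitInterval, ℝ))
    (hgC : ∀ x : unitInterval, gC x = g x) (x : unitInterval) :
    |(∑ k ∈ Finset.range (n + 1), g ((k : ℝ) / n) * phi n k (x : ℝ)) - g (x : ℝ)|
      ≤ ‖bernsteinApproximation n gC - gC‖ := by
  rw [← bernApp_eval n g gC hgC x]
  have h1 : (bernsteinApproximation n gC) x - g (x : ℝ)
      = (bernsteinApproximation n gC - gC) x := by
    simp [hgC x]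
  rw [h1, ← Real.norm_eq_abs]
  exact ContinuousMap.norm_coe_le_norm _ x

set_option maxHeartbeats 1000000 in
theorem stmt5 (f : ℝ → ℝ) (hf : ContDiffOn ℝ 1 f (Set.Icc 0 1))
    (hf0 : f 0 = 0) (hf'0 : derivWithin f (Set.Icc 0 1) 0 = 0) :
    Filter.Tendsto (fun n : ℕ => eDist (G f n) f) Filter.atTop (nhds 0) := by
  have huniq : UniqueDiffOn ℝ (Set.Icc (0:ℝ) 1) := uniqueDiffOn_Icc one_pos
  have hfc : ContinuousOn f (Set.Icc 0 1) := hf.continuousOn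
  have hfd : DifferentiableOn ℝ f (Set.Icc 0 1) := hf.differentiableOn one_ne_zero
  set g : ℝ → ℝ := derivWithin f (Set.Icc 0 1) with hg
  have hgc : ContinuousOn g (Set.Icc 0 1) := hf.continuousOn_derivWithin huniq le_rfl
  set fC : C(unitInterval, ℝ) := ⟨(Set.Icc (0:ℝ) 1).restrict f, hfc.restrict⟩ with hfCdef
  set gC : C(unitInterval, ℝ) := ⟨(Set.Icc (0:ℝ) 1).restrict g, hgc.restrict⟩ with hgCdef
  have hfC : ∀ x : unitInterval, fC x = f x := fun x => rfl
  have hgC : ∀ x : unitInterval, gC x = g x := fun x => rfl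
  have h0mem : (0 : ℝ) ∈ Set.Icc (0:ℝ) 1 := Set.mem_Icc.2 ⟨le_refl 0, zero_le_one⟩
  have hmem : ∀ᶠ n : ℕ in atTop, 1 / (n : ℝ) ∈ Set.Icc (0:ℝ) 1 := by
    filter_upwards [eventually_ge_atTop 1] with n hn
    have hn' : (1 : ℝ) ≤ n := by exact_mod_cast hn
    constructor
    · positivity
    · rw [div_le_one (by linarith)]; exact hn'
  have hseq : Tendsto (fun n : ℕ => 1 / (n : ℝ)) atTop (nhds 0) :=
    tendsto_one_div_atTop_nhds_zero_nat
  have t1 : Tendsto (fun n : ℕ => f (1 / (n : ℝ))) atTop (nhds 0) := by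
    have hc0 : ContinuousWithinAt f (Set.Icc 0 1) 0 := hfc 0 h0mem
    have := hc0.tendsto.comp
      (tendsto_nhdsWithin_of_tendsto_nhds_of_eventually_within _ hseq hmem)
    rwa [hf0] at this
  have t2 : Tendsto (fun n : ℕ => (n : ℝ) * f (1 / (n : ℝ))) atTop (nhds 0) := by
    have hd0 : HasDerivWithinAt f 0 (Set.Icc 0 1) 0 := by
      have := (hfd 0 h0mem).hasDerivWithinAt
      rwa [← hg, hf'0] at this
    rw [hasDerivWithinAt_iff_tendsto_slope] at hd0
    have hmem2 : ∀ᶠ n : ℕ in atTop, 1 / (n : ℝ) ∈ Set.Icc (0:ℝ) 1 \ {0} := by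
      filter_upwards [hmem, eventually_ge_atTop 1] with n hn hn1
      refine ⟨hn, ?_⟩
      have hn' : (1 : ℝ) ≤ n := by exact_mod_cast hn1
      simp only [Set.mem_singleton_iff]
      positivity
    have hcomp := hd0.comp
      (tendsto_nhdsWithin_of_tendsto_nhds_of_eventually_within _ hseq hmem2)
    apply hcomp.congr'
    filter_upwards [eventually_ge_atTop 1] with n hn1
    have hn' : (1 : ℝ) ≤ n := by exact_mod_cast hn1
    have hne : (n : ℝ) ≠ 0 := by linarith
    simp only [Function.comp]
    rw [slope_def_field]
    field_simp [hf0]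
    rw [hf0, sub_zero]
    ring
  have t3 : Tendsto (fun n : ℕ => ‖bernsteinApproximation n fC - fC‖) atTop (nhds 0) :=
    tendsto_iff_norm_sub_tendsto_zero.mp (bernsteinApproximation_uniform fC)
  have t4 : Tendsto (fun n : ℕ => ‖bernsteinApproximation (n - 1) gC - gC‖) atTop (nhds 0) :=
    (tendsto_iff_norm_sub_tendsto_zero.mp (bernsteinApproximation_uniform gC)).comp
      (tendsto_sub_atTop_nat 1)
  rw [Metric.tendsto_atTop]
  intro ε hε
  have hε8 : 0 < ε / 8 := by linarith
  -- uniform continuity of g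
  have hUC : UniformContinuousOn g (Set.Icc 0 1) :=
    isCompact_Icc.uniformContinuousOn_of_continuous hgc
  rw [Metric.uniformContinuousOn_iff] at hUC
  obtain ⟨δ, hδpos, hδ⟩ := hUC (ε / 8) hε8
  have E1 : ∀ᶠ n : ℕ in atTop, |f (1 / (n : ℝ))| < ε / 8 := by
    filter_upwards [NormedAddCommGroup.tendsto_nhds_zero.mp t1 (ε / 8) hε8] with n hn
    rwa [Real.norm_eq_abs] at hn
  have E2 : ∀ᶠ n : ℕ in atTop, |(n : ℝ) * f (1 / (n : ℝ))| < ε / 8 := by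
    filter_upwards [NormedAddCommGroup.tendsto_nhds_zero.mp t2 (ε / 8) hε8] with n hn
    rwa [Real.norm_eq_abs] at hn
  have E3 : ∀ᶠ n : ℕ in atTop, ‖bernsteinApproximation n fC - fC‖ < ε / 8 :=
    t3.eventually (gt_mem_nhds hε8)
  have E4 : ∀ᶠ n : ℕ in atTop, ‖bernsteinApproximation (n - 1) gC - gC‖ < ε / 8 :=
    t4.eventually (gt_mem_nhds hε8)
  have E5 : ∀ᶠ n : ℕ in atTop, (2 : ℝ) / n < δ :=
    (tendsto_const_div_atTop_nhds_zero_nat 2).eventually (gt_mem_nhds hδpos)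
  have E6 : ∀ᶠ n : ℕ in atTop, 2 ≤ n := eventually_ge_atTop 2
  rw [← eventually_atTop]
  filter_upwards [E1, E2, E3, E4, E5, E6] with n h1 h2 h3 h4 h5 h6
  -- per-n estimates
  have hn0 : (0 : ℝ) < n := by
    have : (2 : ℝ) ≤ n := by exact_mod_cast h6
    linarith
  have hm : n - 1 + 1 = n := by omega
  have hm0 : (0 : ℝ) < (n - 1 : ℕ) := by
    have : (1 : ℕ) ≤ n - 1 := by omega
    exact_mod_cast Nat.lt_of_lt_of_le Nat.zero_lt_one this
  -- Part A: sup bound on |G - f|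
  have partA : ∀ x : Set.Icc (0:ℝ) 1,
      |G f n x.1 - f x.1| ≤ |f (1 / (n : ℝ))| + ‖bernsteinApproximation n fC - fC‖ := by
    intro x
    obtain ⟨t, ht⟩ := x
    simp only
    rw [G_eq h6 hf0 t]
    have hB := bernApp_close n f fC hfC ⟨t, ht⟩
    have hφ1 : 0 ≤ phi n 1 t := phi_nonneg ht.1 ht.2
    have hφ1' : phi n 1 t ≤ 1 := phi_le_one (by omega) ht.1 ht.2
    have habs : |f (1 / (n : ℝ)) * phi n 1 t| ≤ |f (1 / (n : ℝ))| := by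
      rw [abs_mul, abs_of_nonneg hφ1]
      calc |f (1 / (n : ℝ))| * phi n 1 t ≤ |f (1 / (n : ℝ))| * 1 := by
            apply mul_le_mul_of_nonneg_left hφ1' (abs_nonneg _)
        _ = |f (1 / (n : ℝ))| := mul_one _
    calc |(∑ i ∈ Finset.range (n + 1), f ((i : ℝ) / n) * phi n i t)
            - f (1 / (n : ℝ)) * phi n 1 t - f t|
        = |((∑ i ∈ Finset.range (n + 1), f ((i : ℝ) / n) * phi n i t) - f t)
            - f (1 / (n : ℝ)) * phi n 1 t| := by rw [sub_right_comm]
      _ ≤ |(∑ i ∈ Finset.range (n + 1), f ((i : ℝ) / n) * phi n i t) - f t|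
            + |f (1 / (n : ℝ)) * phi n 1 t| := abs_sub _ _
      _ ≤ ‖bernsteinApproximation n fC - fC‖ + |f (1 / (n : ℝ))| := add_le_add hB habs
      _ = |f (1 / (n : ℝ))| + ‖bernsteinApproximation n fC - fC‖ := by ring
  -- Part B: sup bound on |G' - f'|
  have partB : ∀ x : Set.Icc (0:ℝ) 1,
      |derivWithin (G f n) (Set.Icc 0 1) x.1 - g x.1|
        ≤ |(n : ℝ) * f (1 / (n : ℝ))| + ε / 8
          + ‖bernsteinApproximation (n - 1) gC - gC‖ := by
    intro x
    obtain ⟨t, ht⟩ := x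
    simp only
    have hdw : derivWithin (G f n) (Set.Icc 0 1) t = deriv (G f n) t :=
      (G_hasDerivAt f n t).differentiableAt.derivWithin (huniq t ht)
    rw [hdw, G_deriv_eq h6 hf0 t]
    set ψ : ℕ → ℝ := fun j => phi (n - 1) j t with hψ
    set a : ℕ → ℝ := fun j => (n : ℝ) * (f (((j + 1 : ℕ) : ℝ) / n) - f ((j : ℝ) / n)) with ha
    have hψnn : ∀ j, 0 ≤ ψ j := fun j => phi_nonneg ht.1 ht.2
    have hψsum : ∑ j ∈ Finset.range n, ψ j = 1 := by
      have := phi_sum (n - 1) t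
      rwa [hm] at this
    -- MVT estimate
    have hMVT : ∀ j ∈ Finset.range n, |a j - g ((j : ℝ) / ((n - 1 : ℕ) : ℝ))| ≤ ε / 8 := by
      intro j hj
      have hjn : j < n := Finset.mem_range.1 hj
      have hjr : (j : ℝ) + 1 ≤ n := by exact_mod_cast hjn
      have hab : (j : ℝ) / n < ((j + 1 : ℕ) : ℝ) / n := by
        apply div_lt_div_of_pos_right _ hn0
        push_cast; linarith
      have hsub : Set.Icc ((j : ℝ) / n) (((j + 1 : ℕ) : ℝ) / n) ⊆ Set.Icc (0:ℝ) 1 := by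
        apply Set.Icc_subset_Icc
        · positivity
        · rw [div_le_one hn0]; push_cast; linarith
      have hder : ∀ y ∈ Set.Ioo ((j : ℝ) / n) (((j + 1 : ℕ) : ℝ) / n), HasDerivAt f (g y) y := by
        intro y hy
        have hy0 : 0 < y := lt_of_le_of_lt (by positivity) hy.1
        have hy1 : y < 1 := lt_of_lt_of_le hy.2 (by rw [div_le_one hn0]; push_cast; linarith)
        have hymem : y ∈ Set.Icc (0:ℝ) 1 := ⟨le_of_lt hy0, le_of_lt hy1⟩
        exact ((hfd y hymem).hasDerivWithinAt).hasDerivAt (Icc_mem_nhds hy0 hy1)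
      obtain ⟨ξ, hξ, hξeq⟩ := exists_hasDerivAt_eq_slope f g hab (hfc.mono hsub) hder
      have hξs : ξ ∈ Set.Icc (0:ℝ) 1 := hsub (Set.Ioo_subset_Icc_self hξ)
      have haj : a j = g ξ := by
        rw [hξeq, ha]
        have hdenom : ((j + 1 : ℕ) : ℝ) / n - (j : ℝ) / n = 1 / n := by
          push_cast; field_simp; ring
        rw [hdenom]
        field_simp
      -- distance between ξ and j/(n-1)
      have hjm1 : (j : ℝ) ≤ ((n - 1 : ℕ) : ℝ) := by
        have : j ≤ n - 1 := by omega
        exact_mod_cast this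
      have hjmmem : (j : ℝ) / ((n - 1 : ℕ) : ℝ) ∈ Set.Icc (0:ℝ) 1 := by
        constructor
        · positivity
        · rw [div_le_one hm0]; exact hjm1
      have hlow : (j : ℝ) / n ≤ (j : ℝ) / ((n - 1 : ℕ) : ℝ) := by
        apply div_le_div_of_nonneg_left (by positivity) hm0
        have : (n - 1 : ℕ) ≤ n := by omega
        exact_mod_cast this
      have hhigh : (j : ℝ) / ((n - 1 : ℕ) : ℝ) ≤ ((j + 1 : ℕ) : ℝ) / n := by
        rw [div_le_div_iff₀ hm0 hn0]
        have h1' : ((n - 1 : ℕ) : ℝ) = (n : ℝ) - 1 := by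
          have : (1 : ℕ) ≤ n := by omega
          push_cast [this]; ring
        push_cast [h1']
        nlinarith
      have hdist : dist ξ ((j : ℝ) / ((n - 1 : ℕ) : ℝ)) < δ := by
        rw [Real.dist_eq, abs_sub_lt_iff]
        have l1 : (j : ℝ) / n < ξ := hξ.1
        have l2 : ξ < ((j + 1 : ℕ) : ℝ) / n := hξ.2
        have hlen : ((j + 1 : ℕ) : ℝ) / n - (j : ℝ) / n = 1 / n := by
          push_cast; field_simp; ring
        have h2n : (1 : ℝ) / n < δ := by
          have : (1 : ℝ) / n < 2 / n := by
            apply div_lt_div_of_pos_right _ hn0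
            norm_num
          linarith
        constructor <;> nlinarith
      have := hδ ξ hξs ((j : ℝ) / ((n - 1 : ℕ) : ℝ)) hjmmem hdist
      rw [Real.dist_eq] at this
      rw [haj]
      exact le_of_lt this
    -- sum comparison
    have key1 : |(∑ j ∈ Finset.range n, a j * ψ j)
        - ∑ j ∈ Finset.range n, g ((j : ℝ) / ((n - 1 : ℕ) : ℝ)) * ψ j| ≤ ε / 8 := by
      rw [← Finset.sum_sub_distrib]
      calc |∑ j ∈ Finset.range n, (a j * ψ j - g ((j : ℝ) / ((n - 1 : ℕ) : ℝ)) * ψ j)|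
          ≤ ∑ j ∈ Finset.range n, |a j * ψ j - g ((j : ℝ) / ((n - 1 : ℕ) : ℝ)) * ψ j| :=
            Finset.abs_sum_le_sum_abs _ _
        _ ≤ ∑ j ∈ Finset.range n, (ε / 8) * ψ j := by
            apply Finset.sum_le_sum
            intro j hj
            have : a j * ψ j - g ((j : ℝ) / ((n - 1 : ℕ) : ℝ)) * ψ j
                = (a j - g ((j : ℝ) / ((n - 1 : ℕ) : ℝ))) * ψ j := by ring
            rw [this, abs_mul, abs_of_nonneg (hψnn j)]
            exact mul_le_mul_of_nonneg_right (hMVT j hj) (hψnn j)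
        _ = ε / 8 := by rw [← Finset.mul_sum, hψsum, mul_one]
    have key2 : |(∑ j ∈ Finset.range n, g ((j : ℝ) / ((n - 1 : ℕ) : ℝ)) * ψ j) - g t|
        ≤ ‖bernsteinApproximation (n - 1) gC - gC‖ := by
      have := bernApp_close (n - 1) g gC hgC ⟨t, ht⟩
      rw [hm] at this
      exact this
    have key3 : |(n : ℝ) * f (1 / (n : ℝ)) * (ψ 0 - ψ 1)|
        ≤ |(n : ℝ) * f (1 / (n : ℝ))| := by
      rw [abs_mul]
      have hψ01 : |ψ 0 - ψ 1| ≤ 1 := by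
        have h0' : ψ 0 ≤ 1 := phi_le_one (by omega) ht.1 ht.2
        have h1' : ψ 1 ≤ 1 := phi_le_one (by omega) ht.1 ht.2
        rw [abs_sub_le_iff]
        constructor <;> [linarith [hψnn 1]; linarith [hψnn 0]]
      calc |(n : ℝ) * f (1 / (n : ℝ))| * |ψ 0 - ψ 1|
          ≤ |(n : ℝ) * f (1 / (n : ℝ))| * 1 :=
            mul_le_mul_of_nonneg_left hψ01 (abs_nonneg _)
        _ = _ := mul_one _
    calc |(∑ j ∈ Finset.range n, a j * ψ j)
            - (n : ℝ) * f (1 / (n : ℝ)) * (ψ 0 - ψ 1) - g t|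
        = |(((∑ j ∈ Finset.range n, a j * ψ j)
            - ∑ j ∈ Finset.range n, g ((j : ℝ) / ((n - 1 : ℕ) : ℝ)) * ψ j)
          + ((∑ j ∈ Finset.range n, g ((j : ℝ) / ((n - 1 : ℕ) : ℝ)) * ψ j) - g t))
          - (n : ℝ) * f (1 / (n : ℝ)) * (ψ 0 - ψ 1)| := by congr 1; ring
      _ ≤ |((∑ j ∈ Finset.range n, a j * ψ j)
            - ∑ j ∈ Finset.range n, g ((j : ℝ) / ((n - 1 : ℕ) : ℝ)) * ψ j)
          + ((∑ j ∈ Finset.range n, g ((j : ℝ) / ((n - 1 : ℕ) : ℝ)) * ψ j) - g t)|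
          + |(n : ℝ) * f (1 / (n : ℝ)) * (ψ 0 - ψ 1)| := abs_sub _ _
      _ ≤ (|(∑ j ∈ Finset.range n, a j * ψ j)
            - ∑ j ∈ Finset.range n, g ((j : ℝ) / ((n - 1 : ℕ) : ℝ)) * ψ j|
          + |(∑ j ∈ Finset.range n, g ((j : ℝ) / ((n - 1 : ℕ) : ℝ)) * ψ j) - g t|)
          + |(n : ℝ) * f (1 / (n : ℝ)) * (ψ 0 - ψ 1)| :=
            add_le_add_left (abs_add_le _ _) _
      _ ≤ (ε / 8 + ‖bernsteinApproximation (n - 1) gC - gC‖)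
          + |(n : ℝ) * f (1 / (n : ℝ))| := by
            exact add_le_add (add_le_add key1 key2) key3
      _ = |(n : ℝ) * f (1 / (n : ℝ))| + ε / 8
          + ‖bernsteinApproximation (n - 1) gC - gC‖ := by ring
  -- assemble
  haveI : Nonempty (Set.Icc (0:ℝ) 1) := ⟨⟨0, h0mem⟩⟩
  have hS1 : (⨆ x : Set.Icc (0:ℝ) 1, |G f n x.1 - f x.1|)
      ≤ |f (1 / (n : ℝ))| + ‖bernsteinApproximation n fC - fC‖ := ciSup_le partA
  have hS2 : (⨆ x : Set.Icc (0:ℝ) 1,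
        |derivWithin (G f n) (Set.Icc 0 1) x.1 - derivWithin f (Set.Icc 0 1) x.1|)
      ≤ |(n : ℝ) * f (1 / (n : ℝ))| + ε / 8
        + ‖bernsteinApproximation (n - 1) gC - gC‖ := ciSup_le partB
  have hnn : 0 ≤ eDist (G f n) f := by
    unfold eDist
    have n1 : (0:ℝ) ≤ ⨆ x : Set.Icc (0:ℝ) 1, |G f n x.1 - f x.1| :=
      Real.iSup_nonneg fun x => abs_nonneg _
    have n2 : (0:ℝ) ≤ ⨆ x : Set.Icc (0:ℝ) 1,
        |derivWithin (G f n) (Set.Icc 0 1) x.1 - derivWithin f (Set.Icc 0 1) x.1| :=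
      Real.iSup_nonneg fun x => abs_nonneg _
    linarith
  rw [Real.dist_0_eq_abs, abs_of_nonneg hnn]
  have hed : eDist (G f n) f
      = (⨆ x : Set.Icc (0:ℝ) 1, |G f n x.1 - f x.1|)
        + (⨆ x : Set.Icc (0:ℝ) 1,
          |derivWithin (G f n) (Set.Icc 0 1) x.1 - derivWithin f (Set.Icc 0 1) x.1|) := rfl
  rw [hed]
  have := add_le_add hS1 hS2
  linarith
end
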